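/- Let X and Y be complex n×n diagonal matrices and 1 ≤ p ≤ 2. Then ||X+Y||_p^p + ||X−Y||_p^p ≥ (||X||_p + ||Y||_p)^p + | ||X||_p − ||Y||_p |^p. For p ≥ 2 the inequality is reversed. -/

import Mathlib

open scoped Matrix

/-- The Schatten `p`-norm `(Tr (M* M)^{p/2})^{1/p}` of a complex matrix. -/
noncomputable def schattenNorm {n : Type*} [Fintype n] [DecidableEq n]
    (p : ℝ) (M : Matrix n n ℂ) : ℝ :=
  (∑ i, (Matrix.isHermitian_conjTranspose_mul_self M).eigenvalues i ^ (p / 2)) ^ (1 / p)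


open Polynomial Matrix

lemma charpoly_conj_units {m : Type*} [Fintype m] [DecidableEq m]
    (U D : Matrix m m ℂ) (hU : U * star U = 1) :
    (U * D * star U).charpoly = D.charpoly := by
  have hU' : star U * U = 1 := mul_eq_one_comm.mp hU
  have hUm : U.map C * (star U).map C = 1 := by
    rw [← Matrix.map_mul, hU, Matrix.map_one C (map_zero C) (map_one C)]
  have key : charmatrix (U * D * star U)
      = U.map C * charmatrix D * (star U).map C := by
    unfold charmatrix
    rw [Matrix.mul_sub, Matrix.sub_mul]
    congr 1
    · rw [← (Matrix.scalar_commute (n := m) (X : ℂ[X]) (Commute.all X) (U.map C)).eq,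
        mul_assoc, hUm, mul_one]
    · simp only [RingHom.mapMatrix_apply, Matrix.map_mul]
  rw [Matrix.charpoly, key, det_mul, det_mul, mul_comm, ← mul_assoc, ← det_mul, ← Matrix.map_mul,
    hU', Matrix.map_one C (map_zero C) (map_one C), det_one, one_mul]
  rfl

lemma eig_multiset_diag {m : Type*} [Fintype m] [DecidableEq m] [LinearOrder m]
    (c : m → ℝ) (hH : (Matrix.diagonal (fun i => (c i : ℂ))).IsHermitian) :
    (Finset.univ.val.map hH.eigenvalues) = Finset.univ.val.map c := by
  have h1 : (Matrix.diagonal (fun i => (c i : ℂ))).charpoly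
      = (Matrix.diagonal (fun i => ((hH.eigenvalues i : ℝ) : ℂ))).charpoly := by
    conv_lhs => rw [hH.spectral_theorem, Unitary.conjStarAlgAut_apply]
    rw [charpoly_conj_units _ _ (Matrix.mem_unitaryGroup_iff.mp (hH.eigenvectorUnitary).2)]
    rfl
  have h2 : ∀ (d : m → ℂ), (Matrix.diagonal d).charpoly
      = ((Finset.univ.val.map d).map (fun a => X - C a)).prod := by
    intro d
    rw [Matrix.charpoly_of_upperTriangular _ (Matrix.blockTriangular_diagonal d)]
    rw [Finset.prod]
    rw [Multiset.map_map]
    simp [Matrix.diagonal_apply_eq, Function.comp]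
  have h3 : Finset.univ.val.map (fun i => ((c i : ℝ) : ℂ))
      = Finset.univ.val.map (fun i => ((hH.eigenvalues i : ℝ) : ℂ)) := by
    have := congrArg Polynomial.roots h1
    rwa [h2, h2, roots_multiset_prod_X_sub_C, roots_multiset_prod_X_sub_C] at this
  have h4 := congrArg (Multiset.map Complex.re) h3
  rw [Multiset.map_map, Multiset.map_map] at h4
  simpa using h4.symm

lemma sum_g_eigenvalues {m : Type*} [Fintype m] [DecidableEq m] [LinearOrder m]
    (c : m → ℝ) {A : Matrix m m ℂ} (hA : A.IsHermitian)
    (hEq : A = Matrix.diagonal (fun i => (c i : ℂ))) (g : ℝ → ℝ) :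
    ∑ i, g (hA.eigenvalues i) = ∑ i, g (c i) := by
  subst hEq
  have h := eig_multiset_diag c hA
  calc ∑ i, g (hA.eigenvalues i)
      = ((Finset.univ.val.map hA.eigenvalues).map g).sum := by
        rw [Multiset.map_map]; rfl
    _ = ((Finset.univ.val.map c).map g).sum := by rw [h]
    _ = ∑ i, g (c i) := by rw [Multiset.map_map]; rfl

lemma schattenNorm_diagonal' {m : Type*} [Fintype m] [DecidableEq m] [LinearOrder m]
    (p : ℝ) (d : m → ℂ) :
    (∑ i, (Matrix.isHermitian_conjTranspose_mul_self (Matrix.diagonal d)).eigenvalues i ^ (p / 2))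
      = ∑ i, ‖d i‖ ^ p := by
  have hM : (Matrix.diagonal d)ᴴ * Matrix.diagonal d
      = Matrix.diagonal (fun i => (((‖d i‖ ^ 2 : ℝ)) : ℂ)) := by
    rw [Matrix.diagonal_conjTranspose, Matrix.diagonal_mul_diagonal]
    have h : (fun i => (star d) i * d i) = fun i => (((‖d i‖ ^ 2 : ℝ)) : ℂ) := by
      funext i
      rw [Pi.star_apply, Complex.star_def, ← Complex.normSq_eq_conj_mul_self,
        Complex.normSq_eq_norm_sq]
    rw [h]
  rw [sum_g_eigenvalues (fun i => (‖d i‖^2 : ℝ)) _ hM (fun t => t ^ (p/2))]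
  congr 1
  funext i
  rw [← Real.rpow_natCast ‖d i‖ 2, ← Real.rpow_mul (norm_nonneg _)]
  norm_num
  congr 1
  ring

section increments
open Real

lemma continuous_incr (q δ : ℝ) (hq0 : 0 ≤ q) :
    Continuous (fun x : ℝ => (x + δ) ^ q - x ^ q) := by
  apply Continuous.sub
  · exact continuous_iff_continuousAt.mpr fun x =>
      (Real.continuousAt_rpow_const _ q (Or.inr hq0)).comp (continuous_add_right δ).continuousAt
  · exact continuous_iff_continuousAt.mpr fun x =>
      Real.continuousAt_rpow_const _ q (Or.inr hq0)

lemma hasDerivAt_incr (q δ : ℝ) {x : ℝ} (hx : x ≠ 0) (hxδ : x + δ ≠ 0) :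
    HasDerivAt (fun x : ℝ => (x + δ) ^ q - x ^ q)
      (q * (x + δ) ^ (q - 1) - q * x ^ (q - 1)) x := by
  have h1 : HasDerivAt (fun x : ℝ => (x + δ) ^ q) (q * (x + δ) ^ (q - 1)) x := by
    have := (Real.hasDerivAt_rpow_const (x := x + δ) (p := q) (Or.inl hxδ)).comp x
      ((hasDerivAt_id x).add_const δ)
    simpa [Function.comp_def] using this
  exact h1.sub (Real.hasDerivAt_rpow_const (Or.inl hx))

lemma incr_anti {q δ : ℝ} (hq0 : 0 ≤ q) (hq1 : q ≤ 1) (hδ : 0 ≤ δ)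
    {s t : ℝ} (hs : 0 ≤ s) (hst : s ≤ t) :
    (t + δ) ^ q - t ^ q ≤ (s + δ) ^ q - s ^ q := by
  have hA : AntitoneOn (fun x : ℝ => (x + δ) ^ q - x ^ q) (Set.Ici 0) := by
    apply antitoneOn_of_deriv_nonpos (convex_Ici 0) (continuous_incr q δ hq0).continuousOn
    · intro x hx
      rw [interior_Ici, Set.mem_Ioi] at hx
      exact (hasDerivAt_incr q δ (ne_of_gt hx) (ne_of_gt (by linarith))).differentiableAt
        |>.differentiableWithinAt
    · intro x hx
      rw [interior_Ici, Set.mem_Ioi] at hx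
      rw [(hasDerivAt_incr q δ (ne_of_gt hx) (ne_of_gt (by linarith))).deriv]
      have : (x + δ) ^ (q - 1) ≤ x ^ (q - 1) :=
        Real.rpow_le_rpow_of_nonpos hx (by linarith) (by linarith)
      nlinarith
  exact hA hs (le_trans hs hst) hst

lemma incr_mono {q δ : ℝ} (hq1 : 1 ≤ q) (hδ : 0 ≤ δ)
    {s t : ℝ} (hs : 0 ≤ s) (hst : s ≤ t) :
    (s + δ) ^ q - s ^ q ≤ (t + δ) ^ q - t ^ q := by
  have hA : MonotoneOn (fun x : ℝ => (x + δ) ^ q - x ^ q) (Set.Ici 0) := by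
    apply monotoneOn_of_deriv_nonneg (convex_Ici 0)
      (continuous_incr q δ (by linarith)).continuousOn
    · intro x hx
      rw [interior_Ici, Set.mem_Ioi] at hx
      exact (hasDerivAt_incr q δ (ne_of_gt hx) (ne_of_gt (by linarith))).differentiableAt
        |>.differentiableWithinAt
    · intro x hx
      rw [interior_Ici, Set.mem_Ioi] at hx
      rw [(hasDerivAt_incr q δ (ne_of_gt hx) (ne_of_gt (by linarith))).deriv]
      have : x ^ (q - 1) ≤ (x + δ) ^ (q - 1) :=
        Real.rpow_le_rpow hx.le (by linarith) (by linarith)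
      nlinarith
  exact hA hs (le_trans hs hst) hst

end increments

lemma sq_rpow_half (p : ℝ) {x : ℝ} (hx : 0 ≤ x) : ((x ^ 2 : ℝ)) ^ (p / 2) = x ^ p := by
  rw [← Real.rpow_natCast x 2, ← Real.rpow_mul hx]
  norm_num
  congr 1
  ring

lemma two_point_core_le_aux {p : ℝ} (hp1 : 1 ≤ p) (hp2 : p ≤ 2) {a b c e : ℝ}
    (ha : 0 ≤ a) (hb : 0 ≤ b) (hc : 0 ≤ c) (he : 0 ≤ e)
    (hsum : a ^ 2 + b ^ 2 = c ^ 2 + e ^ 2) (hac : a ≤ c) (hba : b ≤ a) :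
    c ^ p + e ^ p ≤ a ^ p + b ^ p := by
  have heb : e ^ 2 ≤ b ^ 2 := by nlinarith
  have key := incr_anti (q := p / 2) (δ := c ^ 2 - a ^ 2) (by linarith) (by linarith)
    (by nlinarith) (s := e ^ 2) (t := a ^ 2) (by positivity) (by nlinarith)
  have h1 : a ^ 2 + (c ^ 2 - a ^ 2) = c ^ 2 := by ring
  have h2 : e ^ 2 + (c ^ 2 - a ^ 2) = b ^ 2 := by nlinarith
  rw [h1, h2, sq_rpow_half p ha, sq_rpow_half p hb, sq_rpow_half p hc, sq_rpow_half p he] at key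
  linarith

lemma two_point_core_le {p : ℝ} (hp1 : 1 ≤ p) (hp2 : p ≤ 2) {a b c e : ℝ}
    (ha : 0 ≤ a) (hb : 0 ≤ b) (hc : 0 ≤ c) (he : 0 ≤ e)
    (hsum : a ^ 2 + b ^ 2 = c ^ 2 + e ^ 2) (hac : a ≤ c) (hbc : b ≤ c) :
    c ^ p + e ^ p ≤ a ^ p + b ^ p := by
  rcases le_total b a with h | h
  · exact two_point_core_le_aux hp1 hp2 ha hb hc he hsum hac h
  · have := two_point_core_le_aux hp1 hp2 hb ha hc he (by linarith) hbc h
    linarith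

lemma two_point_core_ge_aux {p : ℝ} (hp2 : 2 ≤ p) {a b c e : ℝ}
    (ha : 0 ≤ a) (hb : 0 ≤ b) (hc : 0 ≤ c) (he : 0 ≤ e)
    (hsum : a ^ 2 + b ^ 2 = c ^ 2 + e ^ 2) (hac : a ≤ c) (hba : b ≤ a) :
    a ^ p + b ^ p ≤ c ^ p + e ^ p := by
  have heb : e ^ 2 ≤ b ^ 2 := by nlinarith
  have key := incr_mono (q := p / 2) (δ := c ^ 2 - a ^ 2) (by linarith)
    (by nlinarith) (s := e ^ 2) (t := a ^ 2) (by positivity) (by nlinarith)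
  have h1 : a ^ 2 + (c ^ 2 - a ^ 2) = c ^ 2 := by ring
  have h2 : e ^ 2 + (c ^ 2 - a ^ 2) = b ^ 2 := by nlinarith
  rw [h1, h2, sq_rpow_half p ha, sq_rpow_half p hb, sq_rpow_half p hc, sq_rpow_half p he] at key
  linarith

lemma two_point_core_ge {p : ℝ} (hp2 : 2 ≤ p) {a b c e : ℝ}
    (ha : 0 ≤ a) (hb : 0 ≤ b) (hc : 0 ≤ c) (he : 0 ≤ e)
    (hsum : a ^ 2 + b ^ 2 = c ^ 2 + e ^ 2) (hac : a ≤ c) (hbc : b ≤ c) :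
    a ^ p + b ^ p ≤ c ^ p + e ^ p := by
  rcases le_total b a with h | h
  · exact two_point_core_ge_aux hp2 ha hb hc he hsum hac h
  · have := two_point_core_ge_aux hp2 hb ha hc he (by linarith) hbc h
    linarith

lemma two_point_le {p : ℝ} (hp1 : 1 ≤ p) (hp2 : p ≤ 2) (z w : ℂ) :
    (‖z‖ + ‖w‖) ^ p + |‖z‖ - ‖w‖| ^ p ≤ ‖z + w‖ ^ p + ‖z - w‖ ^ p := by
  have hpar := parallelogram_law_with_norm ℝ z w
  apply two_point_core_le hp1 hp2 (norm_nonneg _) (norm_nonneg _)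
    (by positivity) (abs_nonneg _)
  · rw [sq_abs]; nlinarith [hpar]
  · exact norm_add_le z w
  · exact norm_sub_le z w

lemma two_point_ge {p : ℝ} (hp2 : 2 ≤ p) (z w : ℂ) :
    ‖z + w‖ ^ p + ‖z - w‖ ^ p ≤ (‖z‖ + ‖w‖) ^ p + |‖z‖ - ‖w‖| ^ p := by
  have hpar := parallelogram_law_with_norm ℝ z w
  apply two_point_core_ge hp2 (norm_nonneg _) (norm_nonneg _)
    (by positivity) (abs_nonneg _)
  · rw [sq_abs]; nlinarith [hpar]
  · exact norm_add_le z w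
  · exact norm_sub_le z w

section beta

noncomputable def betaF (q r : ℝ) : ℝ := ((1 + r) ^ q - (1 - r) ^ q) * r ^ (-q)

lemma hasDerivAt_betaF (q : ℝ) {x : ℝ} (hx0 : 0 < x) (hx1 : x < 1) :
    HasDerivAt (betaF q)
      (q * x ^ (-q - 1) * ((1 - x) ^ (q - 1) - (1 + x) ^ (q - 1))) x := by
  have h1x : (0:ℝ) < 1 + x := by linarith
  have h1x' : (0:ℝ) < 1 - x := by linarith
  have hu : HasDerivAt (fun r : ℝ => (1 + r) ^ q) (q * (1 + x) ^ (q - 1)) x := by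
    have := (Real.hasDerivAt_rpow_const (x := 1 + x) (p := q)
      (Or.inl (ne_of_gt h1x))).comp x ((hasDerivAt_id x).const_add 1)
    simpa [Function.comp_def] using this
  have hv : HasDerivAt (fun r : ℝ => (1 - r) ^ q) (-(q * (1 - x) ^ (q - 1))) x := by
    have := (Real.hasDerivAt_rpow_const (x := 1 - x) (p := q)
      (Or.inl (ne_of_gt h1x'))).comp x ((hasDerivAt_id x).const_sub 1)
    simpa [Function.comp_def] using this
  have hw : HasDerivAt (fun r : ℝ => r ^ (-q)) (-q * x ^ (-q - 1)) x := by
    have := Real.hasDerivAt_rpow_const (x := x) (p := -q) (Or.inl (ne_of_gt hx0))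
    simpa using this
  have := (hu.sub hv).mul hw
  refine this.congr_deriv ?_
  simp only [Pi.sub_apply]
  have e1 : (1 + x) ^ q = (1 + x) ^ (q - 1) * (1 + x) := by
    rw [← Real.rpow_add_one (ne_of_gt h1x)]; ring_nf
  have e2 : (1 - x) ^ q = (1 - x) ^ (q - 1) * (1 - x) := by
    rw [← Real.rpow_add_one (ne_of_gt h1x')]; ring_nf
  have e3 : x ^ (-q) = x ^ (-q - 1) * x := by
    rw [← Real.rpow_add_one (ne_of_gt hx0)]; ring_nf
  rw [e1, e2, e3]
  ring

lemma continuousOn_betaF (q : ℝ) (hq0 : 0 ≤ q) :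
    ContinuousOn (betaF q) (Set.Ioc 0 1) := by
  apply ContinuousOn.mul
  · apply ContinuousOn.sub
    · exact fun x _ => ((Real.continuousAt_rpow_const _ q (Or.inr hq0)).comp
        (by continuity : Continuous fun r : ℝ => 1 + r).continuousAt).continuousWithinAt
    · exact fun x _ => ((Real.continuousAt_rpow_const _ q (Or.inr hq0)).comp
        (by continuity : Continuous fun r : ℝ => 1 - r).continuousAt).continuousWithinAt
  · exact fun x hx => (Real.continuousAt_rpow_const _ (-q)
      (Or.inl (ne_of_gt hx.1))).continuousWithinAt

lemma betaF_mono {q : ℝ} (hq0 : 0 ≤ q) (hq1 : q ≤ 1) :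
    MonotoneOn (betaF q) (Set.Ioc 0 1) := by
  apply monotoneOn_of_deriv_nonneg (convex_Ioc 0 1) (continuousOn_betaF q hq0)
  · intro x hx
    rw [interior_Ioc, Set.mem_Ioo] at hx
    exact (hasDerivAt_betaF q hx.1 hx.2).differentiableAt.differentiableWithinAt
  · intro x hx
    rw [interior_Ioc, Set.mem_Ioo] at hx
    rw [(hasDerivAt_betaF q hx.1 hx.2).deriv]
    have hb : (1 + x) ^ (q - 1) ≤ (1 - x) ^ (q - 1) :=
      Real.rpow_le_rpow_of_nonpos (by linarith [hx.1, hx.2]) (by linarith [hx.1]) (by linarith)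
    have hX : (0:ℝ) ≤ x ^ (-q - 1) := Real.rpow_nonneg hx.1.le _
    nlinarith [mul_nonneg (mul_nonneg hq0 hX) (sub_nonneg.mpr hb)]

lemma betaF_anti {q : ℝ} (hq1 : 1 ≤ q) :
    AntitoneOn (betaF q) (Set.Ioc 0 1) := by
  apply antitoneOn_of_deriv_nonpos (convex_Ioc 0 1) (continuousOn_betaF q (by linarith))
  · intro x hx
    rw [interior_Ioc, Set.mem_Ioo] at hx
    exact (hasDerivAt_betaF q hx.1 hx.2).differentiableAt.differentiableWithinAt
  · intro x hx
    rw [interior_Ioc, Set.mem_Ioo] at hx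
    rw [(hasDerivAt_betaF q hx.1 hx.2).deriv]
    have hb : (1 - x) ^ (q - 1) ≤ (1 + x) ^ (q - 1) :=
      Real.rpow_le_rpow (by linarith [hx.1, hx.2]) (by linarith [hx.1]) (by linarith)
    have hX : (0:ℝ) ≤ x ^ (-q - 1) := Real.rpow_nonneg hx.1.le _
    nlinarith [mul_nonneg (mul_nonneg (show (0:ℝ) ≤ q by linarith) hX) (sub_nonneg.mpr hb)]

end beta

section G

lemma rpow_succ' {x : ℝ} (hx : 0 ≤ x) {p : ℝ} (hp : 0 < p) :
    x ^ p = x ^ (p - 1) * x := by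
  rcases eq_or_lt_of_le hx with h | h
  · rw [← h, Real.zero_rpow (ne_of_gt hp), mul_zero]
  · rw [← Real.rpow_add_one (ne_of_gt h)]
    ring_nf

noncomputable def GF (p r s : ℝ) : ℝ :=
  (1 + s) ^ p + (1 - s) ^ p - ((1 + r) ^ (p - 1) + (1 - r) ^ (p - 1))
    - betaF (p - 1) r * s ^ p

lemma GF_self {p r : ℝ} (hp : 1 ≤ p) (hr0 : 0 < r) (hr1 : r ≤ 1) : GF p r r = 0 := by
  have hbr : betaF (p - 1) r * r ^ p = ((1 + r) ^ (p - 1) - (1 - r) ^ (p - 1)) * r := by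
    rw [betaF]
    rw [mul_assoc, ← Real.rpow_add hr0]
    have : -(p - 1) + p = 1 := by ring
    rw [this, Real.rpow_one]
  rw [GF, hbr, rpow_succ' (by linarith : (0:ℝ) ≤ 1 + r) (by linarith : (0:ℝ) < p),
    rpow_succ' (by linarith : (0:ℝ) ≤ 1 - r) (by linarith : (0:ℝ) < p)]
  ring

lemma continuous_GF (p r : ℝ) (hp : 0 ≤ p) : Continuous (GF p r) := by
  have h1 : Continuous fun s : ℝ => (1 + s) ^ p :=
    continuous_iff_continuousAt.mpr fun x =>
      (Real.continuousAt_rpow_const _ p (Or.inr hp)).comp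
        (by continuity : Continuous fun s : ℝ => 1 + s).continuousAt
  have h2 : Continuous fun s : ℝ => (1 - s) ^ p :=
    continuous_iff_continuousAt.mpr fun x =>
      (Real.continuousAt_rpow_const _ p (Or.inr hp)).comp
        (by continuity : Continuous fun s : ℝ => 1 - s).continuousAt
  have h3 : Continuous fun s : ℝ => s ^ p :=
    continuous_iff_continuousAt.mpr fun x =>
      Real.continuousAt_rpow_const _ p (Or.inr hp)
  unfold GF
  continuity

lemma hasDerivAt_GF (p r : ℝ) {s : ℝ} (hs0 : 0 < s) (hs1 : s < 1) :
    HasDerivAt (GF p r)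
      (p * s ^ (p - 1) * (betaF (p - 1) s - betaF (p - 1) r)) s := by
  have h1s : (0:ℝ) < 1 + s := by linarith
  have h1s' : (0:ℝ) < 1 - s := by linarith
  have hu : HasDerivAt (fun t : ℝ => (1 + t) ^ p) (p * (1 + s) ^ (p - 1)) s := by
    have := (Real.hasDerivAt_rpow_const (x := 1 + s) (p := p)
      (Or.inl (ne_of_gt h1s))).comp s ((hasDerivAt_id s).const_add 1)
    simpa [Function.comp_def] using this
  have hv : HasDerivAt (fun t : ℝ => (1 - t) ^ p) (-(p * (1 - s) ^ (p - 1))) s := by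
    have := (Real.hasDerivAt_rpow_const (x := 1 - s) (p := p)
      (Or.inl (ne_of_gt h1s'))).comp s ((hasDerivAt_id s).const_sub 1)
    simpa [Function.comp_def] using this
  have hw : HasDerivAt (fun t : ℝ => betaF (p - 1) r * t ^ p)
      (betaF (p - 1) r * (p * s ^ (p - 1))) s :=
    (Real.hasDerivAt_rpow_const (x := s) (p := p) (Or.inl (ne_of_gt hs0))).const_mul _
  have := ((hu.add hv).sub_const ((1 + r) ^ (p - 1) + (1 - r) ^ (p - 1))).sub hw
  refine this.congr_deriv ?_
  have hβs : betaF (p - 1) s * s ^ (p - 1) = (1 + s) ^ (p - 1) - (1 - s) ^ (p - 1) := by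
    rw [betaF, mul_assoc, ← Real.rpow_add hs0]
    norm_num
  linear_combination (-p) * hβs

lemma GF_nonneg {p r : ℝ} (hp1 : 1 ≤ p) (hp2 : p ≤ 2) (hr0 : 0 < r) (hr1 : r ≤ 1)
    {s : ℝ} (hs0 : 0 ≤ s) (hs1 : s ≤ 1) : 0 ≤ GF p r s := by
  have hmono := betaF_mono (q := p - 1) (by linarith) (by linarith)
  rcases le_total s r with h | h
  · have hanti : AntitoneOn (GF p r) (Set.Icc 0 r) := by
      apply antitoneOn_of_deriv_nonpos (convex_Icc 0 r)
        (continuous_GF p r (by linarith)).continuousOn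
      · intro x hx
        rw [interior_Icc, Set.mem_Ioo] at hx
        exact (hasDerivAt_GF p r hx.1 (by linarith)).differentiableAt.differentiableWithinAt
      · intro x hx
        rw [interior_Icc, Set.mem_Ioo] at hx
        rw [(hasDerivAt_GF p r hx.1 (by linarith [hx.2] : x < 1)).deriv]
        have hβ : betaF (p - 1) x ≤ betaF (p - 1) r :=
          hmono (Set.mem_Ioc.mpr ⟨hx.1, by linarith⟩) (Set.mem_Ioc.mpr ⟨hr0, hr1⟩)
            (by linarith [hx.2])
        have hX : (0:ℝ) ≤ x ^ (p - 1) := Real.rpow_nonneg hx.1.le _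
        nlinarith [mul_nonneg (mul_nonneg (by linarith : (0:ℝ) ≤ p) hX) (sub_nonneg.mpr hβ)]
    have := hanti (Set.mem_Icc.mpr ⟨hs0, h⟩) (Set.mem_Icc.mpr ⟨hr0.le, le_rfl⟩) h
    rw [GF_self hp1 hr0 hr1] at this
    exact this
  · have hmon : MonotoneOn (GF p r) (Set.Icc r 1) := by
      apply monotoneOn_of_deriv_nonneg (convex_Icc r 1)
        (continuous_GF p r (by linarith)).continuousOn
      · intro x hx
        rw [interior_Icc, Set.mem_Ioo] at hx
        exact (hasDerivAt_GF p r (by linarith [hx.1]) hx.2).differentiableAt.differentiableWithinAt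
      · intro x hx
        rw [interior_Icc, Set.mem_Ioo] at hx
        rw [(hasDerivAt_GF p r (by linarith [hx.1] : 0 < x) hx.2).deriv]
        have hβ : betaF (p - 1) r ≤ betaF (p - 1) x :=
          hmono (Set.mem_Ioc.mpr ⟨hr0, hr1⟩)
            (Set.mem_Ioc.mpr ⟨by linarith [hx.1], hx.2.le⟩) (by linarith [hx.1])
        have hX : (0:ℝ) ≤ x ^ (p - 1) := Real.rpow_nonneg (by linarith [hx.1]) _
        nlinarith [mul_nonneg (mul_nonneg (by linarith : (0:ℝ) ≤ p) hX) (sub_nonneg.mpr hβ)]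
    have := hmon (Set.mem_Icc.mpr ⟨le_rfl, hr1⟩) (Set.mem_Icc.mpr ⟨h, hs1⟩) h
    rw [GF_self hp1 hr0 hr1] at this
    exact this

lemma GF_nonpos {p r : ℝ} (hp2 : 2 ≤ p) (hr0 : 0 < r) (hr1 : r ≤ 1)
    {s : ℝ} (hs0 : 0 ≤ s) (hs1 : s ≤ 1) : GF p r s ≤ 0 := by
  have hanti' := betaF_anti (q := p - 1) (by linarith)
  rcases le_total s r with h | h
  · have hmon : MonotoneOn (GF p r) (Set.Icc 0 r) := by
      apply monotoneOn_of_deriv_nonneg (convex_Icc 0 r)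
        (continuous_GF p r (by linarith)).continuousOn
      · intro x hx
        rw [interior_Icc, Set.mem_Ioo] at hx
        exact (hasDerivAt_GF p r hx.1 (by linarith)).differentiableAt.differentiableWithinAt
      · intro x hx
        rw [interior_Icc, Set.mem_Ioo] at hx
        rw [(hasDerivAt_GF p r hx.1 (by linarith [hx.2] : x < 1)).deriv]
        have hβ : betaF (p - 1) r ≤ betaF (p - 1) x :=
          hanti' (Set.mem_Ioc.mpr ⟨hx.1, by linarith⟩) (Set.mem_Ioc.mpr ⟨hr0, hr1⟩)
            (by linarith [hx.2])
        have hX : (0:ℝ) ≤ x ^ (p - 1) := Real.rpow_nonneg hx.1.le _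
        nlinarith [mul_nonneg (mul_nonneg (by linarith : (0:ℝ) ≤ p) hX) (sub_nonneg.mpr hβ)]
    have := hmon (Set.mem_Icc.mpr ⟨hs0, h⟩) (Set.mem_Icc.mpr ⟨hr0.le, le_rfl⟩) h
    rw [GF_self (by linarith) hr0 hr1] at this
    exact this
  · have hanti : AntitoneOn (GF p r) (Set.Icc r 1) := by
      apply antitoneOn_of_deriv_nonpos (convex_Icc r 1)
        (continuous_GF p r (by linarith)).continuousOn
      · intro x hx
        rw [interior_Icc, Set.mem_Ioo] at hx
        exact (hasDerivAt_GF p r (by linarith [hx.1]) hx.2).differentiableAt.differentiableWithinAt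
      · intro x hx
        rw [interior_Icc, Set.mem_Ioo] at hx
        rw [(hasDerivAt_GF p r (by linarith [hx.1] : 0 < x) hx.2).deriv]
        have hβ : betaF (p - 1) x ≤ betaF (p - 1) r :=
          hanti' (Set.mem_Ioc.mpr ⟨hr0, hr1⟩)
            (Set.mem_Ioc.mpr ⟨by linarith [hx.1], hx.2.le⟩) (by linarith [hx.1])
        have hX : (0:ℝ) ≤ x ^ (p - 1) := Real.rpow_nonneg (by linarith [hx.1]) _
        nlinarith [mul_nonneg (mul_nonneg (by linarith : (0:ℝ) ≤ p) hX) (sub_nonneg.mpr hβ)]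
    have := hanti (Set.mem_Icc.mpr ⟨le_rfl, hr1⟩) (Set.mem_Icc.mpr ⟨h, hs1⟩) h
    rw [GF_self (by linarith) hr0 hr1] at this
    exact this

end G

section claim1

lemma rpow_subadd {q a b : ℝ} (hq0 : 0 ≤ q) (hq1 : q ≤ 1) (ha : 0 ≤ a) (hb : 0 ≤ b) :
    (a + b) ^ q ≤ a ^ q + b ^ q := by
  have h := NNReal.rpow_add_le_add_rpow a.toNNReal b.toNNReal hq0 hq1
  have h2 := NNReal.coe_le_coe.mpr h
  push_cast at h2
  rwa [Real.coe_toNNReal a ha, Real.coe_toNNReal b hb] at h2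

lemma rpow_superadd {q a b : ℝ} (hq1 : 1 ≤ q) (ha : 0 ≤ a) (hb : 0 ≤ b) :
    a ^ q + b ^ q ≤ (a + b) ^ q := by
  have h := NNReal.add_rpow_le_rpow_add a.toNNReal b.toNNReal hq1
  have h2 := NNReal.coe_le_coe.mpr h
  push_cast at h2
  rwa [Real.coe_toNNReal a ha, Real.coe_toNNReal b hb] at h2

lemma beta_le_alpha {q r : ℝ} (hq0 : 0 ≤ q) (hq1 : q ≤ 1) (hr0 : 0 < r) (hr1 : r ≤ 1) :
    betaF q r ≤ (1 + r) ^ q + (1 - r) ^ q := by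
  have h1 : (1 + r) ^ q ≤ (1 - r) ^ q + (2 * r) ^ q := by
    have := rpow_subadd hq0 hq1 (by linarith : (0:ℝ) ≤ 1 - r) (by linarith : (0:ℝ) ≤ 2 * r)
    have e : 1 - r + 2 * r = 1 + r := by ring
    rwa [e] at this
  have h2 : (2 * r) ^ q = 2 ^ q * r ^ q := Real.mul_rpow (by norm_num) hr0.le
  have h3 : (2:ℝ) ^ q ≤ (1 + r) ^ q + (1 - r) ^ q := by
    have := rpow_subadd hq0 hq1 (by linarith : (0:ℝ) ≤ 1 + r) (by linarith : (0:ℝ) ≤ 1 - r)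
    have e : (1 + r) + (1 - r) = 2 := by ring
    rwa [e] at this
  have h4 : (1 + r) ^ q - (1 - r) ^ q ≤ ((1 + r) ^ q + (1 - r) ^ q) * r ^ q := by
    have h5 : (2:ℝ) ^ q * r ^ q ≤ ((1 + r) ^ q + (1 - r) ^ q) * r ^ q :=
      mul_le_mul_of_nonneg_right h3 (Real.rpow_nonneg hr0.le q)
    linarith
  have h6 : ((1 + r) ^ q + (1 - r) ^ q) * r ^ q * r ^ (-q)
      = (1 + r) ^ q + (1 - r) ^ q := by
    rw [mul_assoc, ← Real.rpow_add hr0]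
    simp
  calc betaF q r = ((1 + r) ^ q - (1 - r) ^ q) * r ^ (-q) := rfl
    _ ≤ ((1 + r) ^ q + (1 - r) ^ q) * r ^ q * r ^ (-q) :=
        mul_le_mul_of_nonneg_right h4 (Real.rpow_nonneg hr0.le _)
    _ = _ := h6

lemma alpha_le_beta {q r : ℝ} (hq1 : 1 ≤ q) (hr0 : 0 < r) (hr1 : r ≤ 1) :
    (1 + r) ^ q + (1 - r) ^ q ≤ betaF q r := by
  have h1 : (1 - r) ^ q + (2 * r) ^ q ≤ (1 + r) ^ q := by
    have := rpow_superadd hq1 (by linarith : (0:ℝ) ≤ 1 - r) (by linarith : (0:ℝ) ≤ 2 * r)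
    have e : 1 - r + 2 * r = 1 + r := by ring
    rwa [e] at this
  have h2 : (2 * r) ^ q = 2 ^ q * r ^ q := Real.mul_rpow (by norm_num) hr0.le
  have h3 : (1 + r) ^ q + (1 - r) ^ q ≤ (2:ℝ) ^ q := by
    have := rpow_superadd hq1 (by linarith : (0:ℝ) ≤ 1 + r) (by linarith : (0:ℝ) ≤ 1 - r)
    have e : (1 + r) + (1 - r) = 2 := by ring
    rwa [e] at this
  have h4 : ((1 + r) ^ q + (1 - r) ^ q) * r ^ q ≤ (1 + r) ^ q - (1 - r) ^ q := by
    have h5 : ((1 + r) ^ q + (1 - r) ^ q) * r ^ q ≤ (2:ℝ) ^ q * r ^ q :=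
      mul_le_mul_of_nonneg_right h3 (Real.rpow_nonneg hr0.le q)
    linarith
  have h6 : ((1 + r) ^ q + (1 - r) ^ q) * r ^ q * r ^ (-q)
      = (1 + r) ^ q + (1 - r) ^ q := by
    rw [mul_assoc, ← Real.rpow_add hr0]
    simp
  calc (1 + r) ^ q + (1 - r) ^ q
      = ((1 + r) ^ q + (1 - r) ^ q) * r ^ q * r ^ (-q) := h6.symm
    _ ≤ ((1 + r) ^ q - (1 - r) ^ q) * r ^ (-q) :=
        mul_le_mul_of_nonneg_right h4 (Real.rpow_nonneg hr0.le _)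
    _ = betaF q r := rfl

lemma scale_GF {p A B : ℝ} (hp : 1 ≤ p) (hA : 0 < A) (hB : 0 ≤ B) (hBA : B ≤ A) (r : ℝ) :
    GF p r (B / A) * A ^ p
      = (A + B) ^ p + (A - B) ^ p
        - ((1 + r) ^ (p - 1) + (1 - r) ^ (p - 1)) * A ^ p - betaF (p - 1) r * B ^ p := by
  have e1 : (1 + B / A) ^ p * A ^ p = (A + B) ^ p := by
    rw [← Real.mul_rpow (by positivity) hA.le]
    congr 1
    field_simp
  have e2 : (1 - B / A) ^ p * A ^ p = (A - B) ^ p := by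
    rw [← Real.mul_rpow (by rw [sub_nonneg]; exact (div_le_one hA).mpr hBA) hA.le]
    congr 1
    field_simp
  have e3 : (B / A) ^ p * A ^ p = B ^ p := by
    rw [← Real.mul_rpow (by positivity) hA.le]
    congr 1
    field_simp
  simp only [GF]
  linear_combination e1 + e2 - betaF (p - 1) r * e3

lemma claim1_le {p r A B : ℝ} (hp1 : 1 ≤ p) (hp2 : p ≤ 2) (hr0 : 0 < r) (hr1 : r ≤ 1)
    (hA : 0 ≤ A) (hB : 0 ≤ B) :
    ((1 + r) ^ (p - 1) + (1 - r) ^ (p - 1)) * A ^ p + betaF (p - 1) r * B ^ p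
      ≤ (A + B) ^ p + |A - B| ^ p := by
  have hp0 : (0:ℝ) < p := by linarith
  have main : ∀ A B : ℝ, 0 ≤ B → B ≤ A →
      ((1 + r) ^ (p - 1) + (1 - r) ^ (p - 1)) * A ^ p + betaF (p - 1) r * B ^ p
        ≤ (A + B) ^ p + (A - B) ^ p := by
    intro A B hB hBA
    have hA : 0 ≤ A := le_trans hB hBA
    rcases eq_or_lt_of_le hA with h | h
    · have hB0 : B = 0 := le_antisymm (h ▸ hBA) hB
      rw [← h, hB0]
      simp [Real.zero_rpow (ne_of_gt hp0)]
    · have hs0 : 0 ≤ B / A := by positivity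
      have hs1 : B / A ≤ 1 := (div_le_one h).mpr hBA
      have hG := GF_nonneg hp1 hp2 hr0 hr1 hs0 hs1
      have := mul_nonneg hG (Real.rpow_nonneg hA p)
      rw [scale_GF hp1 h hB hBA r] at this
      linarith
  rcases le_total B A with h | h
  · have := main A B hB h
    rwa [abs_of_nonneg (by linarith)]
  · have h1 := main B A hA h
    have hβα : betaF (p - 1) r ≤ (1 + r) ^ (p - 1) + (1 - r) ^ (p - 1) :=
      beta_le_alpha (by linarith) (by linarith) hr0 hr1
    have hAB : A ^ p ≤ B ^ p := Real.rpow_le_rpow hA h hp0.le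
    have e : A - B = -(B - A) := by ring
    rw [e, abs_neg, abs_of_nonneg (by linarith), add_comm A B]
    nlinarith [h1, mul_nonneg (sub_nonneg.mpr hβα) (sub_nonneg.mpr hAB)]

lemma claim1_ge {p r A B : ℝ} (hp2 : 2 ≤ p) (hr0 : 0 < r) (hr1 : r ≤ 1)
    (hA : 0 ≤ A) (hB : 0 ≤ B) :
    (A + B) ^ p + |A - B| ^ p
      ≤ ((1 + r) ^ (p - 1) + (1 - r) ^ (p - 1)) * A ^ p + betaF (p - 1) r * B ^ p := by
  have hp0 : (0:ℝ) < p := by linarith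
  have main : ∀ A B : ℝ, 0 ≤ B → B ≤ A →
      (A + B) ^ p + (A - B) ^ p
        ≤ ((1 + r) ^ (p - 1) + (1 - r) ^ (p - 1)) * A ^ p + betaF (p - 1) r * B ^ p := by
    intro A B hB hBA
    have hA : 0 ≤ A := le_trans hB hBA
    rcases eq_or_lt_of_le hA with h | h
    · have hB0 : B = 0 := le_antisymm (h ▸ hBA) hB
      rw [← h, hB0]
      simp [Real.zero_rpow (ne_of_gt hp0)]
    · have hs0 : 0 ≤ B / A := by positivity
      have hs1 : B / A ≤ 1 := (div_le_one h).mpr hBA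
      have hG := GF_nonpos hp2 hr0 hr1 hs0 hs1
      have := mul_nonpos_of_nonpos_of_nonneg hG (Real.rpow_nonneg hA p)
      rw [scale_GF (by linarith) h hB hBA r] at this
      linarith
  rcases le_total B A with h | h
  · have := main A B hB h
    rwa [abs_of_nonneg (by linarith)]
  · have h1 := main B A hA h
    have hβα : (1 + r) ^ (p - 1) + (1 - r) ^ (p - 1) ≤ betaF (p - 1) r :=
      alpha_le_beta (by linarith) hr0 hr1
    have hAB : A ^ p ≤ B ^ p := Real.rpow_le_rpow hA h hp0.le
    have e : A - B = -(B - A) := by ring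
    rw [e, abs_neg, abs_of_nonneg (by linarith), add_comm A B]
    nlinarith [h1, mul_nonneg (sub_nonneg.mpr hβα) (sub_nonneg.mpr hAB)]

lemma alpha_beta_opt {p A B : ℝ} (hp1 : 1 ≤ p) (hA : 0 < A) (hB0 : 0 < B) (hBA : B ≤ A) :
    ((1 + B / A) ^ (p - 1) + (1 - B / A) ^ (p - 1)) * A ^ p
      + betaF (p - 1) (B / A) * B ^ p = (A + B) ^ p + (A - B) ^ p := by
  have hr0 : 0 < B / A := by positivity
  have hr1 : B / A ≤ 1 := (div_le_one hA).mpr hBA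
  have h := GF_self hp1 hr0 hr1
  have h2 := congrArg (· * A ^ p) h
  simp only [zero_mul] at h2
  rw [scale_GF hp1 hA hB0.le hBA (B / A)] at h2
  linarith

end claim1

section core

lemma rpow_one_div_rpow {S p : ℝ} (hS : 0 ≤ S) (hp : p ≠ 0) : (S ^ (1 / p)) ^ p = S := by
  rw [← Real.rpow_mul hS, one_div, inv_mul_cancel₀ hp, Real.rpow_one]

lemma hanner_sum_le_aux {k : ℕ} {p : ℝ} (hp1 : 1 ≤ p) (hp2 : p ≤ 2) (f g : Fin k → ℂ)
    (hBA : (∑ i, ‖g i‖ ^ p) ^ (1 / p) ≤ (∑ i, ‖f i‖ ^ p) ^ (1 / p)) :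
    ((∑ i, ‖f i‖ ^ p) ^ (1 / p) + (∑ i, ‖g i‖ ^ p) ^ (1 / p)) ^ p
      + |(∑ i, ‖f i‖ ^ p) ^ (1 / p) - (∑ i, ‖g i‖ ^ p) ^ (1 / p)| ^ p
      ≤ ∑ i, ‖f i + g i‖ ^ p + ∑ i, ‖f i - g i‖ ^ p := by
  have hp0 : (0:ℝ) < p := by linarith
  set A := (∑ i, ‖f i‖ ^ p) ^ (1 / p) with hA
  set B := (∑ i, ‖g i‖ ^ p) ^ (1 / p) with hB
  have hSf : (0:ℝ) ≤ ∑ i, ‖f i‖ ^ p :=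
    Finset.sum_nonneg fun i _ => Real.rpow_nonneg (norm_nonneg _) _
  have hSg : (0:ℝ) ≤ ∑ i, ‖g i‖ ^ p :=
    Finset.sum_nonneg fun i _ => Real.rpow_nonneg (norm_nonneg _) _
  have hA0 : 0 ≤ A := Real.rpow_nonneg hSf _
  have hB0 : 0 ≤ B := Real.rpow_nonneg hSg _
  have hApow : A ^ p = ∑ i, ‖f i‖ ^ p := rpow_one_div_rpow hSf hp0.ne'
  have hBpow : B ^ p = ∑ i, ‖g i‖ ^ p := rpow_one_div_rpow hSg hp0.ne'
  rcases eq_or_lt_of_le hA0 with hA' | hA'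
  · -- A = 0, hence B = 0
    have hB' : B = 0 := le_antisymm (hA' ▸ hBA) hB0
    rw [← hA', hB']
    simp only [add_zero, sub_zero, abs_zero, Real.zero_rpow hp0.ne']
    positivity
  rcases eq_or_lt_of_le hB0 with hB' | hB'
  · -- B = 0, hence g = 0
    have hSg0 : ∑ i, ‖g i‖ ^ p = 0 := by
      by_contra hne
      have : 0 < ∑ i, ‖g i‖ ^ p := lt_of_le_of_ne hSg (Ne.symm hne)
      have h2 : 0 < B := by rw [hB]; exact Real.rpow_pos_of_pos this _
      exact absurd hB'.symm (ne_of_gt h2)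
    have hg : ∀ i, g i = 0 := by
      intro i
      have h0 : ‖g i‖ ^ p = 0 := by
        have := (Finset.sum_eq_zero_iff_of_nonneg
          (fun i _ => Real.rpow_nonneg (norm_nonneg (g i)) p)).mp hSg0 i (Finset.mem_univ i)
        exact this
      have := (Real.rpow_eq_zero (norm_nonneg _) hp0.ne').mp h0
      simpa using this
    have hfg : ∀ i, ‖f i + g i‖ = ‖f i‖ := fun i => by rw [hg i, add_zero]
    have hfg' : ∀ i, ‖f i - g i‖ = ‖f i‖ := fun i => by rw [hg i, sub_zero]
    simp only [hfg, hfg']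
    rw [← hB', add_zero, sub_zero, abs_of_nonneg hA0, ← hApow]
  · -- 0 < B ≤ A
    have hAB : B ≤ A := hBA
    have hApos : 0 < A := lt_of_lt_of_le hB' hAB
    set r := B / A with hr
    have hr0 : 0 < r := div_pos hB' hApos
    have hr1 : r ≤ 1 := (div_le_one hApos).mpr hAB
    have pointwise : ∀ i : Fin k,
        ((1 + r) ^ (p - 1) + (1 - r) ^ (p - 1)) * ‖f i‖ ^ p + betaF (p - 1) r * ‖g i‖ ^ p
          ≤ ‖f i + g i‖ ^ p + ‖f i - g i‖ ^ p := by
      intro i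
      calc ((1 + r) ^ (p - 1) + (1 - r) ^ (p - 1)) * ‖f i‖ ^ p + betaF (p - 1) r * ‖g i‖ ^ p
          ≤ (‖f i‖ + ‖g i‖) ^ p + |‖f i‖ - ‖g i‖| ^ p :=
            claim1_le hp1 hp2 hr0 hr1 (norm_nonneg _) (norm_nonneg _)
        _ ≤ ‖f i + g i‖ ^ p + ‖f i - g i‖ ^ p := two_point_le hp1 hp2 (f i) (g i)
    have hsum := Finset.sum_le_sum (fun i (_ : i ∈ Finset.univ) => pointwise i)
    rw [Finset.sum_add_distrib, Finset.sum_add_distrib, ← Finset.mul_sum, ← Finset.mul_sum] at hsum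
    rw [← hApow, ← hBpow] at hsum
    have hopt := alpha_beta_opt hp1 hApos hB' hAB
    rw [← hr] at hopt
    rw [abs_of_nonneg (by linarith)]
    calc (A + B) ^ p + (A - B) ^ p
        = ((1 + r) ^ (p - 1) + (1 - r) ^ (p - 1)) * A ^ p + betaF (p - 1) r * B ^ p :=
          hopt.symm
      _ ≤ ∑ i, ‖f i + g i‖ ^ p + ∑ i, ‖f i - g i‖ ^ p := hsum

end core

section core2

lemma sum_norm_rpow_eq_zero {k : ℕ} {p : ℝ} (hp0 : 0 < p) {h : Fin k → ℂ}
    (hS : ∑ i, ‖h i‖ ^ p = 0) : ∀ i, h i = 0 := by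
  intro i
  have h0 : ‖h i‖ ^ p = 0 :=
    (Finset.sum_eq_zero_iff_of_nonneg
      (fun i _ => Real.rpow_nonneg (norm_nonneg (h i)) p)).mp hS i (Finset.mem_univ i)
  have := (Real.rpow_eq_zero (norm_nonneg _) hp0.ne').mp h0
  simpa using this

lemma hanner_sum_ge_aux {k : ℕ} {p : ℝ} (hp2 : 2 ≤ p) (f g : Fin k → ℂ)
    (hBA : (∑ i, ‖g i‖ ^ p) ^ (1 / p) ≤ (∑ i, ‖f i‖ ^ p) ^ (1 / p)) :
    ∑ i, ‖f i + g i‖ ^ p + ∑ i, ‖f i - g i‖ ^ p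
      ≤ ((∑ i, ‖f i‖ ^ p) ^ (1 / p) + (∑ i, ‖g i‖ ^ p) ^ (1 / p)) ^ p
      + |(∑ i, ‖f i‖ ^ p) ^ (1 / p) - (∑ i, ‖g i‖ ^ p) ^ (1 / p)| ^ p := by
  have hp0 : (0:ℝ) < p := by linarith
  have hp1 : (1:ℝ) ≤ p := by linarith
  set A := (∑ i, ‖f i‖ ^ p) ^ (1 / p) with hA
  set B := (∑ i, ‖g i‖ ^ p) ^ (1 / p) with hB
  have hSf : (0:ℝ) ≤ ∑ i, ‖f i‖ ^ p :=
    Finset.sum_nonneg fun i _ => Real.rpow_nonneg (norm_nonneg _) _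
  have hSg : (0:ℝ) ≤ ∑ i, ‖g i‖ ^ p :=
    Finset.sum_nonneg fun i _ => Real.rpow_nonneg (norm_nonneg _) _
  have hA0 : 0 ≤ A := Real.rpow_nonneg hSf _
  have hB0 : 0 ≤ B := Real.rpow_nonneg hSg _
  have hApow : A ^ p = ∑ i, ‖f i‖ ^ p := rpow_one_div_rpow hSf hp0.ne'
  have hBpow : B ^ p = ∑ i, ‖g i‖ ^ p := rpow_one_div_rpow hSg hp0.ne'
  rcases eq_or_lt_of_le hA0 with hA' | hA'
  · -- A = 0, hence B = 0, f = 0, g = 0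
    have hB' : B = 0 := le_antisymm (hA' ▸ hBA) hB0
    have hSf0 : ∑ i, ‖f i‖ ^ p = 0 := by rw [← hApow, ← hA', Real.zero_rpow hp0.ne']
    have hSg0 : ∑ i, ‖g i‖ ^ p = 0 := by rw [← hBpow, hB', Real.zero_rpow hp0.ne']
    have hf := sum_norm_rpow_eq_zero hp0 hSf0
    have hg := sum_norm_rpow_eq_zero hp0 hSg0
    have e1 : ∀ i : Fin k, ‖f i + g i‖ ^ p = 0 := fun i => by
      rw [hf i, hg i, add_zero, norm_zero, Real.zero_rpow hp0.ne']
    have e2 : ∀ i : Fin k, ‖f i - g i‖ ^ p = 0 := fun i => by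
      rw [hf i, hg i, sub_zero, norm_zero, Real.zero_rpow hp0.ne']
    simp only [e1, e2, Finset.sum_const_zero, add_zero]
    positivity
  rcases eq_or_lt_of_le hB0 with hB' | hB'
  · -- B = 0, hence g = 0
    have hSg0 : ∑ i, ‖g i‖ ^ p = 0 := by rw [← hBpow, ← hB', Real.zero_rpow hp0.ne']
    have hg := sum_norm_rpow_eq_zero hp0 hSg0
    have hfg : ∀ i, ‖f i + g i‖ = ‖f i‖ := fun i => by rw [hg i, add_zero]
    have hfg' : ∀ i, ‖f i - g i‖ = ‖f i‖ := fun i => by rw [hg i, sub_zero]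
    simp only [hfg, hfg']
    rw [← hB', add_zero, sub_zero, abs_of_nonneg hA0, ← hApow]
  · -- 0 < B ≤ A
    have hAB : B ≤ A := hBA
    have hApos : 0 < A := lt_of_lt_of_le hB' hAB
    set r := B / A with hr
    have hr0 : 0 < r := div_pos hB' hApos
    have hr1 : r ≤ 1 := (div_le_one hApos).mpr hAB
    have pointwise : ∀ i : Fin k,
        ‖f i + g i‖ ^ p + ‖f i - g i‖ ^ p
          ≤ ((1 + r) ^ (p - 1) + (1 - r) ^ (p - 1)) * ‖f i‖ ^ p
            + betaF (p - 1) r * ‖g i‖ ^ p := by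
      intro i
      calc ‖f i + g i‖ ^ p + ‖f i - g i‖ ^ p
          ≤ (‖f i‖ + ‖g i‖) ^ p + |‖f i‖ - ‖g i‖| ^ p := two_point_ge hp2 (f i) (g i)
        _ ≤ ((1 + r) ^ (p - 1) + (1 - r) ^ (p - 1)) * ‖f i‖ ^ p
            + betaF (p - 1) r * ‖g i‖ ^ p :=
            claim1_ge hp2 hr0 hr1 (norm_nonneg _) (norm_nonneg _)
    have hsum := Finset.sum_le_sum (fun i (_ : i ∈ Finset.univ) => pointwise i)
    rw [Finset.sum_add_distrib, Finset.sum_add_distrib, ← Finset.mul_sum, ← Finset.mul_sum]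
      at hsum
    rw [← hApow, ← hBpow] at hsum
    have hopt := alpha_beta_opt hp1 hApos hB' hAB
    rw [← hr] at hopt
    rw [abs_of_nonneg (by linarith)]
    calc ∑ i, ‖f i + g i‖ ^ p + ∑ i, ‖f i - g i‖ ^ p
        ≤ ((1 + r) ^ (p - 1) + (1 - r) ^ (p - 1)) * A ^ p + betaF (p - 1) r * B ^ p := hsum
      _ = (A + B) ^ p + (A - B) ^ p := hopt

lemma hanner_sum_le {k : ℕ} {p : ℝ} (hp1 : 1 ≤ p) (hp2 : p ≤ 2) (f g : Fin k → ℂ) :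
    ((∑ i, ‖f i‖ ^ p) ^ (1 / p) + (∑ i, ‖g i‖ ^ p) ^ (1 / p)) ^ p
      + |(∑ i, ‖f i‖ ^ p) ^ (1 / p) - (∑ i, ‖g i‖ ^ p) ^ (1 / p)| ^ p
      ≤ ∑ i, ‖f i + g i‖ ^ p + ∑ i, ‖f i - g i‖ ^ p := by
  rcases le_total ((∑ i, ‖g i‖ ^ p) ^ (1 / p)) ((∑ i, ‖f i‖ ^ p) ^ (1 / p)) with h | h
  · exact hanner_sum_le_aux hp1 hp2 f g h
  · have := hanner_sum_le_aux hp1 hp2 g f h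
    have e1 : ∀ i : Fin k, ‖g i + f i‖ = ‖f i + g i‖ := fun i => by rw [add_comm]
    have e2 : ∀ i : Fin k, ‖g i - f i‖ = ‖f i - g i‖ := fun i => norm_sub_rev _ _
    simp only [e1, e2] at this
    rw [add_comm ((∑ i, ‖g i‖ ^ p) ^ (1 / p)) _, abs_sub_comm] at this
    linarith

lemma hanner_sum_ge {k : ℕ} {p : ℝ} (hp2 : 2 ≤ p) (f g : Fin k → ℂ) :
    ∑ i, ‖f i + g i‖ ^ p + ∑ i, ‖f i - g i‖ ^ p
      ≤ ((∑ i, ‖f i‖ ^ p) ^ (1 / p) + (∑ i, ‖g i‖ ^ p) ^ (1 / p)) ^ p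
      + |(∑ i, ‖f i‖ ^ p) ^ (1 / p) - (∑ i, ‖g i‖ ^ p) ^ (1 / p)| ^ p := by
  rcases le_total ((∑ i, ‖g i‖ ^ p) ^ (1 / p)) ((∑ i, ‖f i‖ ^ p) ^ (1 / p)) with h | h
  · exact hanner_sum_ge_aux hp2 f g h
  · have := hanner_sum_ge_aux hp2 g f h
    have e1 : ∀ i : Fin k, ‖g i + f i‖ = ‖f i + g i‖ := fun i => by rw [add_comm]
    have e2 : ∀ i : Fin k, ‖g i - f i‖ = ‖f i - g i‖ := fun i => norm_sub_rev _ _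
    simp only [e1, e2] at this
    rw [add_comm ((∑ i, ‖g i‖ ^ p) ^ (1 / p)) _, abs_sub_comm] at this
    linarith

end core2


lemma schattenNorm_diagonal {k : ℕ} (p : ℝ) (d : Fin k → ℂ) :
    schattenNorm p (Matrix.diagonal d) = (∑ i, ‖d i‖ ^ p) ^ (1 / p) := by
  unfold schattenNorm
  rw [schattenNorm_diagonal' p d]

theorem hanner_diagonal {n : ℕ} (p : ℝ) (x y : Fin n → ℂ) :
    (1 ≤ p → p ≤ 2 →
      (schattenNorm p (Matrix.diagonal x) + schattenNorm p (Matrix.diagonal y)) ^ p +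
          |schattenNorm p (Matrix.diagonal x) - schattenNorm p (Matrix.diagonal y)| ^ p ≤
        schattenNorm p (Matrix.diagonal x + Matrix.diagonal y) ^ p +
          schattenNorm p (Matrix.diagonal x - Matrix.diagonal y) ^ p) ∧
    (2 ≤ p →
      schattenNorm p (Matrix.diagonal x + Matrix.diagonal y) ^ p +
          schattenNorm p (Matrix.diagonal x - Matrix.diagonal y) ^ p ≤
        (schattenNorm p (Matrix.diagonal x) + schattenNorm p (Matrix.diagonal y)) ^ p +
          |schattenNorm p (Matrix.diagonal x) - schattenNorm p (Matrix.diagonal y)| ^ p) := by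
  have hadd : Matrix.diagonal x + Matrix.diagonal y = Matrix.diagonal (fun i => x i + y i) :=
    Matrix.diagonal_add x y
  have hsub : Matrix.diagonal x - Matrix.diagonal y = Matrix.diagonal (fun i => x i - y i) :=
    Matrix.diagonal_sub x y
  constructor
  · intro hp1 hp2
    have hp0 : (0:ℝ) < p := by linarith
    rw [hadd, hsub, schattenNorm_diagonal, schattenNorm_diagonal, schattenNorm_diagonal,
      schattenNorm_diagonal]
    have hS1 : (0:ℝ) ≤ ∑ i, ‖x i + y i‖ ^ p :=
      Finset.sum_nonneg fun i _ => Real.rpow_nonneg (norm_nonneg _) _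
    have hS2 : (0:ℝ) ≤ ∑ i, ‖x i - y i‖ ^ p :=
      Finset.sum_nonneg fun i _ => Real.rpow_nonneg (norm_nonneg _) _
    rw [rpow_one_div_rpow hS1 hp0.ne', rpow_one_div_rpow hS2 hp0.ne']
    have h := hanner_sum_le hp1 hp2 x y
    simpa only [Pi.add_apply, Pi.sub_apply] using h
  · intro hp2
    have hp0 : (0:ℝ) < p := by linarith
    rw [hadd, hsub, schattenNorm_diagonal, schattenNorm_diagonal, schattenNorm_diagonal,
      schattenNorm_diagonal]
    have hS1 : (0:ℝ) ≤ ∑ i, ‖x i + y i‖ ^ p :=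
      Finset.sum_nonneg fun i _ => Real.rpow_nonneg (norm_nonneg _) _
    have hS2 : (0:ℝ) ≤ ∑ i, ‖x i - y i‖ ^ p :=
      Finset.sum_nonneg fun i _ => Real.rpow_nonneg (norm_nonneg _) _
    rw [rpow_one_div_rpow hS1 hp0.ne', rpow_one_div_rpow hS2 hp0.ne']
    have h := hanner_sum_ge hp2 x y
    simpa only [Pi.add_apply, Pi.sub_apply] using h
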